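/- Let N ≥ 1, A ∈ ℝ^{2N×2N}, B ∈ ℝ^{2N×N}, and let P, Q be symmetric real 2N×2N matrices with AᵀP + PA = −Q. Assume there is λ_Q > 0 such that ⟨x, Q x⟩ ≥ λ_Q ‖x‖² for all x ∈ ℝ^{2N}. Let ε > 0, ρ̄ > 0, and let η, ρ : ℝ → ℝ^N × ℝ be functions with ‖η(t)‖ ≤ ρ(t) ≤ ρ̄ for all t. Let e : ℝ → ℝ^{2N} be differentiable and satisfy ė(t) = A e(t) + B(r(t) + η(t)), where w(t) = Bᵀ P e(t) and r(t) = −ρ(t) w(t)/‖w(t)‖ if ‖w(t)‖ > ε and r(t) = −ρ(t) w(t)/ε if ‖w(t)‖ ≤ ε. Then for every time t₀ at which ‖e(t₀)‖ > √(ε ρ̄ / (2 λ_Q)), the derivative of the Lyapunov function V(t) = ⟨e(t), P e(t)⟩ satisfies V̇(t₀) < 0. That is, V is strictly decreasing whenever the tracking error lies outside the ball of radius δ = √(ε ρ̄ / (2 λ_Q)) centered at the origin. -/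

import Mathlib

open Matrix
open scoped RealInnerProductSpace

/-- Matrix-vector multiplication viewed as a map between Euclidean spaces. -/
noncomputable def mv {m n : ℕ} (A : Matrix (Fin m) (Fin n) ℝ)
    (x : EuclideanSpace ℝ (Fin n)) : EuclideanSpace ℝ (Fin m) :=
  (EuclideanSpace.equiv (Fin m) ℝ).symm (A.mulVec ((EuclideanSpace.equiv (Fin n) ℝ) x))

noncomputable def mvL {m n : ℕ} (A : Matrix (Fin m) (Fin n) ℝ) :
    EuclideanSpace ℝ (Fin n) →L[ℝ] EuclideanSpace ℝ (Fin m) :=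
  LinearMap.toContinuousLinearMap
    ((((EuclideanSpace.equiv (Fin m) ℝ).symm.toLinearEquiv.toLinearMap).comp
      A.mulVecLin).comp (EuclideanSpace.equiv (Fin n) ℝ).toLinearEquiv.toLinearMap)

lemma mvL_apply {m n : ℕ} (A : Matrix (Fin m) (Fin n) ℝ) (x : EuclideanSpace ℝ (Fin n)) :
    mvL A x = mv A x := rfl

lemma mv_inner {m n : ℕ} (M : Matrix (Fin m) (Fin n) ℝ) (x : EuclideanSpace ℝ (Fin n))
    (y : EuclideanSpace ℝ (Fin m)) : ⟪mv M x, y⟫ = ⟪x, mv Mᵀ y⟫ := by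
  simp only [mv, PiLp.inner_apply, RCLike.inner_apply, conj_trivial]
  show y.ofLp ⬝ᵥ (M *ᵥ x.ofLp) = (Mᵀ *ᵥ y.ofLp) ⬝ᵥ x.ofLp
  rw [dotProduct_mulVec, Matrix.mulVec_transpose]

lemma mv_mul {m n k : ℕ} (M : Matrix (Fin m) (Fin n) ℝ) (N : Matrix (Fin n) (Fin k) ℝ)
    (x : EuclideanSpace ℝ (Fin k)) : mv (M * N) x = mv M (mv N x) := by
  simp [mv, Matrix.mulVec_mulVec]
  rw [← Matrix.mulVec_mulVec]; rfl

lemma mv_add_mat {m n : ℕ} (M N : Matrix (Fin m) (Fin n) ℝ) (x : EuclideanSpace ℝ (Fin n)) :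
    mv (M + N) x = mv M x + mv N x := by
  simp [mv, Matrix.add_mulVec]

lemma mv_neg {m n : ℕ} (M : Matrix (Fin m) (Fin n) ℝ) (x : EuclideanSpace ℝ (Fin n)) :
    mv (-M) x = -(mv M x) := by
  simp [mv, Matrix.neg_mulVec]

lemma mv_add {m n : ℕ} (M : Matrix (Fin m) (Fin n) ℝ) (x y : EuclideanSpace ℝ (Fin n)) :
    mv M (x + y) = mv M x + mv M y := by
  simp [mv, Matrix.mulVec_add]

/-- Under the robust outer-loop control law, with
`AᵀP + PA = −Q`, `⟨x, Qx⟩ ≥ λ_Q ‖x‖²`, `‖η(t)‖ ≤ ρ(t) ≤ ρ̄`,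
`w(t) = BᵀP e(t)`, and `r(t) = −ρ(t) w(t)/‖w(t)‖` if `‖w(t)‖ > ε`,
`r(t) = −ρ(t) w(t)/ε` otherwise, the Lyapunov function
`V(t) = ⟨e(t), P e(t)⟩` along the error dynamics `ė = A e + B (r + η)` is
strictly decreasing whenever `‖e(t₀)‖ > √(ε ρ̄ / (2 λ_Q))`. -/
theorem lyapunov_strictly_decreasing_outside_ball
    (N : ℕ) (hN : 1 ≤ N)
    (A : Matrix (Fin (2 * N)) (Fin (2 * N)) ℝ)
    (B : Matrix (Fin (2 * N)) (Fin N) ℝ)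
    (P Q : Matrix (Fin (2 * N)) (Fin (2 * N)) ℝ)
    (hP : P.IsSymm) (hQ : Q.IsSymm)
    (hLyap : Aᵀ * P + P * A = -Q)
    (lamQ : ℝ) (hlamQ : 0 < lamQ)
    (hQlb : ∀ x : EuclideanSpace ℝ (Fin (2 * N)), lamQ * ‖x‖ ^ 2 ≤ ⟪x, mv Q x⟫)
    (ε ρbar : ℝ) (hε : 0 < ε) (hρbar : 0 < ρbar)
    (η : ℝ → EuclideanSpace ℝ (Fin N)) (ρ : ℝ → ℝ)
    (hηρ : ∀ t, ‖η t‖ ≤ ρ t) (hρ : ∀ t, ρ t ≤ ρbar)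
    (e : ℝ → EuclideanSpace ℝ (Fin (2 * N)))
    (w : ℝ → EuclideanSpace ℝ (Fin N))
    (hw : ∀ t, w t = mv Bᵀ (mv P (e t)))
    (r : ℝ → EuclideanSpace ℝ (Fin N))
    (hr : ∀ t, r t =
      if ε < ‖w t‖ then (-(ρ t / ‖w t‖)) • w t else (-(ρ t / ε)) • w t)
    (he : ∀ t, HasDerivAt e (mv A (e t) + mv B (r t + η t)) t) :
    ∀ t₀, Real.sqrt (ε * ρbar / (2 * lamQ)) < ‖e t₀‖ →
      deriv (fun s => ⟪e s, mv P (e s)⟫) t₀ < 0 := by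
  intro t₀ ht₀
  set u := r t₀ + η t₀ with hu
  set d := mv A (e t₀) + mv B u with hd
  have hde : HasDerivAt e d t₀ := he t₀
  have hPe : HasDerivAt (fun s => mv P (e s)) (mv P d) t₀ := by
    have h := ((mvL P).hasFDerivAt (x := e t₀)).comp_hasDerivAt t₀ hde
    exact h
  have hV : HasDerivAt (fun s => ⟪e s, mv P (e s)⟫)
      (⟪e t₀, mv P d⟫ + ⟪d, mv P (e t₀)⟫) t₀ := hde.inner ℝ hPe
  rw [hV.deriv]
  -- key algebraic identity
  have h1 : ⟪mv A (e t₀), mv P (e t₀)⟫ = ⟪e t₀, mv (Aᵀ * P) (e t₀)⟫ := by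
    rw [mv_inner, ← mv_mul]
  have h2 : ⟪mv B u, mv P (e t₀)⟫ = ⟪u, w t₀⟫ := by
    rw [mv_inner, hw]
  have h3 : ⟪e t₀, mv P (mv B u)⟫ = ⟪u, w t₀⟫ := by
    rw [real_inner_comm, ← mv_mul, mv_inner, Matrix.transpose_mul, hP.eq, mv_mul, hw]
  have key : ⟪e t₀, mv P d⟫ + ⟪d, mv P (e t₀)⟫
      = -⟪e t₀, mv Q (e t₀)⟫ + 2 * ⟪u, w t₀⟫ := by
    have hPd : mv P d = mv P (mv A (e t₀)) + mv P (mv B u) := by rw [hd, mv_add]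
    rw [hPd, hd, inner_add_right, inner_add_left, h1, h2, h3]
    have h4 : ⟪e t₀, mv P (mv A (e t₀))⟫ = ⟪e t₀, mv (P * A) (e t₀)⟫ := by rw [mv_mul]
    rw [h4]
    have h5 : ⟪e t₀, mv (P * A) (e t₀)⟫ + ⟪e t₀, mv (Aᵀ * P) (e t₀)⟫
        = -⟪e t₀, mv Q (e t₀)⟫ := by
      rw [← inner_add_right, ← mv_add_mat]
      rw [show P * A + (Aᵀ * P) = -Q from (add_comm _ _).trans hLyap]
      rw [mv_neg, inner_neg_right]
    linarith [h5]
  rw [key]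
  -- bound on ⟪u, w t₀⟫
  have hρ0 : 0 ≤ ρ t₀ := le_trans (norm_nonneg _) (hηρ t₀)
  have hηw : ⟪η t₀, w t₀⟫ ≤ ρ t₀ * ‖w t₀‖ :=
    (real_inner_le_norm _ _).trans (mul_le_mul_of_nonneg_right (hηρ t₀) (norm_nonneg _))
  have hbound : ⟪u, w t₀⟫ ≤ ε * ρbar / 4 := by
    have hsplit : ⟪u, w t₀⟫ = ⟪r t₀, w t₀⟫ + ⟪η t₀, w t₀⟫ := by
      rw [hu, inner_add_left]
    by_cases hcase : ε < ‖w t₀‖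
    · have hwne : ‖w t₀‖ ≠ 0 := (hε.trans hcase).ne'
      have hrw : ⟪r t₀, w t₀⟫ = -(ρ t₀ * ‖w t₀‖) := by
        rw [hr t₀, if_pos hcase, real_inner_smul_left, real_inner_self_eq_norm_sq]
        field_simp
      have : ⟪u, w t₀⟫ ≤ 0 := by rw [hsplit, hrw]; linarith
      have hpos : 0 ≤ ε * ρbar / 4 := by positivity
      linarith
    · push_neg at hcase
      have hrw : ⟪r t₀, w t₀⟫ = -(ρ t₀ / ε * ‖w t₀‖ ^ 2) := by
        rw [hr t₀, if_neg (not_lt.mpr hcase), real_inner_smul_left,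
          real_inner_self_eq_norm_sq]
        ring
      set s := ‖w t₀‖ with hs
      have hs0 : 0 ≤ s := norm_nonneg _
      set q := ρ t₀ / ε with hqdef
      have hq0 : 0 ≤ q := by positivity
      have hqε : q * ε = ρ t₀ := div_mul_cancel₀ _ hε.ne'
      have hqb : q * ε ≤ ρbar := by rw [hqε]; exact hρ t₀
      have hsq : 0 ≤ q * (2 * s - ε) ^ 2 := by positivity
      have hqe : q * ε * ε ≤ ρbar * ε := mul_le_mul_of_nonneg_right hqb hε.le
      rw [hsplit, hrw]
      nlinarith [hηw, hqε]
  -- lower bound on the quadratic term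
  have harg : 0 ≤ ε * ρbar / (2 * lamQ) := by positivity
  have hsq : ε * ρbar / (2 * lamQ) < ‖e t₀‖ ^ 2 := by
    nlinarith [Real.sq_sqrt harg, Real.sqrt_nonneg (ε * ρbar / (2 * lamQ)), ht₀,
      mul_self_lt_mul_self (Real.sqrt_nonneg _) ht₀]
  have hhalf : lamQ * (ε * ρbar / (2 * lamQ)) = ε * ρbar / 2 := by
    field_simp
  have hQe := hQlb (e t₀)
  have : ε * ρbar / 2 < lamQ * ‖e t₀‖ ^ 2 := by
    calc ε * ρbar / 2 = lamQ * (ε * ρbar / (2 * lamQ)) := hhalf.symm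
    _ < lamQ * ‖e t₀‖ ^ 2 := by exact mul_lt_mul_of_pos_left hsq hlamQ
  linarith
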